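/- Let φ : R → R' be a Jordan homomorphism, K the commutator ideal of R, and K' the commutator ideal of R'. Suppose φ₁, φ₂ : K → R'_φ are additive maps, with φ₁ multiplicative and φ₂ antimultiplicative, witnessing that φ is the sum of a homomorphism and an antihomomorphism on K (i.e., satisfying conditions (a)–(d) of that definition). Then φ₁(K²) ⊆ K' and φ₂(K²) ⊆ K', where K² denotes the ideal of products. -/

import Mathlib

/-- An additive map `φ` between (possibly non-unital) associative rings is a
Jordan homomorphism if `φ(x²) = φ(x)²` and `φ(xyx) = φ(x)φ(y)φ(x)`. -/
def IsJordanHom {R R' : Type*} [NonUnitalRing R] [NonUnitalRing R'] (φ : R → R') : Prop :=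
  (∀ x y : R, φ (x + y) = φ x + φ y) ∧
  (∀ x : R, φ (x * x) = φ x * φ x) ∧
  (∀ x y : R, φ (x * y * x) = φ x * φ y * φ x)

/-- `R'_φ`: the (non-unital) subring of `R'` generated by the image of `φ`. -/
def rngGen {R R' : Type*} [NonUnitalRing R] [NonUnitalRing R'] (φ : R → R') :
    NonUnitalSubring R' :=
  NonUnitalSubring.closure (Set.range φ)

/-- `V_φ`: the two-sided ideal of `R'_φ` generated by all `{x,y} = φ(xy) − φ(x)φ(y)`. -/
def Vphi {R R' : Type*} [NonUnitalRing R] [NonUnitalRing R'] (φ : R → R') :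
    TwoSidedIdeal (rngGen φ) :=
  TwoSidedIdeal.span {a : rngGen φ | ∃ x y : R, (a : R') = φ (x * y) - φ x * φ y}

/-- `W_φ`: the two-sided ideal of `R'_φ` generated by all `⟨x,y⟩ = φ(xy) − φ(y)φ(x)`. -/
def Wphi {R R' : Type*} [NonUnitalRing R] [NonUnitalRing R'] (φ : R → R') :
    TwoSidedIdeal (rngGen φ) :=
  TwoSidedIdeal.span {a : rngGen φ | ∃ x y : R, (a : R') = φ (x * y) - φ y * φ x}

/-- `φ` is splittable if `V_φ ∩ W_φ = {0}`. -/
def Splittable {R R' : Type*} [NonUnitalRing R] [NonUnitalRing R'] (φ : R → R') : Prop :=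
  Vphi φ ⊓ Wphi φ = ⊥

/-- The commutator ideal of `R`: the two-sided ideal generated by all `xy − yx`. -/
def commutatorIdeal (R : Type*) [NonUnitalRing R] : TwoSidedIdeal R :=
  TwoSidedIdeal.span {z : R | ∃ x y : R, z = x * y - y * x}

/-- `φ` is the sum of the homomorphism `φ₁` and the antihomomorphism `φ₂` on the ideal
`I` of `R`; here `φ₁, φ₂ : R → R'_φ` are only constrained on `I`. -/
def IsSumHomAntihomWith {R R' : Type*} [NonUnitalRing R] [NonUnitalRing R']
    (φ : R → R') (I : TwoSidedIdeal R) (φ₁ φ₂ : R → rngGen φ) : Prop :=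
  (∀ u ∈ I, ∀ v ∈ I, φ₁ (u + v) = φ₁ u + φ₁ v) ∧
  (∀ u ∈ I, ∀ v ∈ I, φ₂ (u + v) = φ₂ u + φ₂ v) ∧
  (∀ u ∈ I, ∀ v ∈ I, φ₁ (u * v) = φ₁ u * φ₁ v) ∧
  (∀ u ∈ I, ∀ v ∈ I, φ₂ (u * v) = φ₂ v * φ₂ u) ∧
  (∀ u ∈ I, φ u = (φ₁ u : R') + (φ₂ u : R')) ∧
  (∃ J₁ J₂ : TwoSidedIdeal (rngGen φ),
    (∀ u ∈ I, φ₁ u ∈ J₁) ∧ (∀ u ∈ I, φ₂ u ∈ J₂) ∧ J₁ ⊓ J₂ = ⊥) ∧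
  (∀ u ∈ I, ∀ x : R, (φ₁ (u * x) : R') = (φ₁ u : R') * φ x ∧
      (φ₁ (x * u) : R') = φ x * (φ₁ u : R')) ∧
  (∀ u ∈ I, ∀ x : R, (φ₂ (u * x) : R') = φ x * (φ₂ u : R') ∧
      (φ₂ (x * u) : R') = (φ₂ u : R') * φ x)

/-- `φ` is the sum of a homomorphism and an antihomomorphism on the ideal `I` of `R`. -/
def IsSumHomAntihomOn {R R' : Type*} [NonUnitalRing R] [NonUnitalRing R']
    (φ : R → R') (I : TwoSidedIdeal R) : Prop :=
  ∃ φ₁ φ₂ : R → rngGen φ, IsSumHomAntihomWith φ I φ₁ φ₂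

/-- If `φ₁, φ₂` witness that the Jordan homomorphism `φ` is the sum of a homomorphism
and an antihomomorphism on the commutator ideal `K` of `R`, then `φ₁(K²) ⊆ K'` and
`φ₂(K²) ⊆ K'`, where `K'` is the commutator ideal of `R'` and `K²` is the ideal
generated by products of elements of `K`. -/
theorem sum_on_commutatorIdeal_maps_sq_into_commutatorIdeal
    {R R' : Type*} [NonUnitalRing R] [NonUnitalRing R']
    (φ : R → R') (hφ : IsJordanHom φ)
    (φ₁ φ₂ : R → rngGen φ)
    (hw : IsSumHomAntihomWith φ (commutatorIdeal R) φ₁ φ₂) :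
    ∀ u ∈ TwoSidedIdeal.span
        {z : R | ∃ a ∈ commutatorIdeal R, ∃ b ∈ commutatorIdeal R, z = a * b},
      (φ₁ u : R') ∈ commutatorIdeal R' ∧ (φ₂ u : R') ∈ commutatorIdeal R' := by
  classical
  obtain ⟨h1add, h2add, h1mul, h2mul, hsum, hJ, hc, hd⟩ := hw
  set K := commutatorIdeal R with hK
  set K' := commutatorIdeal R' with hK'
  -- φ₁, φ₂ vanish at 0 and respect subtraction on K
  have hz1 : φ₁ 0 = 0 := by
    have := h1add 0 K.zero_mem 0 K.zero_mem
    rw [add_zero] at this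
    exact left_eq_add.mp this
  have hz2 : φ₂ 0 = 0 := by
    have := h2add 0 K.zero_mem 0 K.zero_mem
    rw [add_zero] at this
    exact left_eq_add.mp this
  have hsub1 : ∀ u ∈ K, ∀ v ∈ K, φ₁ (u - v) = φ₁ u - φ₁ v := by
    intro u hu v hv
    have := h1add (u - v) (K.sub_mem hu hv) v hv
    rw [sub_add_cancel] at this
    rw [this]; abel
  have hsub2 : ∀ u ∈ K, ∀ v ∈ K, φ₂ (u - v) = φ₂ u - φ₂ v := by
    intro u hu v hv
    have := h2add (u - v) (K.sub_mem hu hv) v hv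
    rw [sub_add_cancel] at this
    rw [this]; abel
  have hneg1 : ∀ u ∈ K, φ₁ (-u) = - φ₁ u := by
    intro u hu
    have := hsub1 0 K.zero_mem u hu
    rw [zero_sub, hz1, zero_sub] at this; exact this
  have hneg2 : ∀ u ∈ K, φ₂ (-u) = - φ₂ u := by
    intro u hu
    have := hsub2 0 K.zero_mem u hu
    rw [zero_sub, hz2, zero_sub] at this; exact this
  -- commutators of R' are in K'
  have hcomm : ∀ x y : R', x * y - y * x ∈ K' :=
    fun x y => TwoSidedIdeal.subset_span ⟨x, y, rfl⟩
  -- key computation on generators of K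
  have hgen : ∀ a ∈ K, ∀ x y : R,
      (φ₁ (a * (x * y - y * x)) : R') ∈ K' ∧ (φ₂ (a * (x * y - y * x)) : R') ∈ K' := by
    intro a ha x y
    have hxy : a * (x * y) ∈ K := K.mul_mem_right _ _ ha
    have hyx : a * (y * x) ∈ K := K.mul_mem_right _ _ ha
    have hax : a * x ∈ K := K.mul_mem_right _ _ ha
    have hay : a * y ∈ K := K.mul_mem_right _ _ ha
    have e1 : (φ₁ (a * (x * y)) : R') = (φ₁ a : R') * φ x * φ y := by
      rw [show a * (x * y) = (a * x) * y from (mul_assoc a x y).symm,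
        (hc (a * x) hax y).1, (hc a ha x).1]
    have e1' : (φ₁ (a * (y * x)) : R') = (φ₁ a : R') * φ y * φ x := by
      rw [show a * (y * x) = (a * y) * x from (mul_assoc a y x).symm,
        (hc (a * y) hay x).1, (hc a ha y).1]
    have e2 : (φ₂ (a * (x * y)) : R') = φ y * (φ x * (φ₂ a : R')) := by
      rw [show a * (x * y) = (a * x) * y from (mul_assoc a x y).symm,
        (hd (a * x) hax y).1, (hd a ha x).1]
    have e2' : (φ₂ (a * (y * x)) : R') = φ x * (φ y * (φ₂ a : R')) := by
      rw [show a * (y * x) = (a * y) * x from (mul_assoc a y x).symm,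
        (hd (a * y) hay x).1, (hd a ha y).1]
    constructor
    · have : (φ₁ (a * (x * y - y * x)) : R')
          = (φ₁ a : R') * (φ x * φ y - φ y * φ x) := by
        rw [mul_sub, hsub1 _ hxy _ hyx]
        push_cast
        rw [e1, e1', mul_sub, mul_assoc, mul_assoc]
      rw [this]
      exact K'.mul_mem_left _ _ (hcomm _ _)
    · have : (φ₂ (a * (x * y - y * x)) : R')
          = (φ y * φ x - φ x * φ y) * (φ₂ a : R') := by
        rw [mul_sub, hsub2 _ hxy _ hyx]
        push_cast
        rw [e2, e2', sub_mul, mul_assoc, mul_assoc]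
      rw [this]
      exact K'.mul_mem_right _ _ (hcomm _ _)
  -- extend from generators of K to all of K (in the second factor)
  have hprod : ∀ a ∈ K, ∀ b ∈ K,
      (φ₁ (a * b) : R') ∈ K' ∧ (φ₂ (a * b) : R') ∈ K' := by
    intro a ha b hb
    let T : TwoSidedIdeal R := TwoSidedIdeal.mk'
      {v : R | ∀ a ∈ K, (φ₁ (a * v) : R') ∈ K' ∧ (φ₂ (a * v) : R') ∈ K'}
      (by intro a ha; rw [mul_zero, hz1, hz2]; simp [K'.zero_mem])
      (by
        intro v w hv hw a ha
        rw [mul_add, h1add _ (K.mul_mem_right _ _ ha) _ (K.mul_mem_right _ _ ha),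
          h2add _ (K.mul_mem_right _ _ ha) _ (K.mul_mem_right _ _ ha)]
        push_cast
        exact ⟨K'.add_mem (hv a ha).1 (hw a ha).1, K'.add_mem (hv a ha).2 (hw a ha).2⟩)
      (by
        intro v hv a ha
        rw [mul_neg, hneg1 _ (K.mul_mem_right _ _ ha),
          hneg2 _ (K.mul_mem_right _ _ ha)]
        push_cast
        exact ⟨K'.neg_mem (hv a ha).1, K'.neg_mem (hv a ha).2⟩)
      (by
        intro x v hv a ha
        rw [show a * (x * v) = (a * x) * v from (mul_assoc a x v).symm]
        exact hv (a * x) (K.mul_mem_right _ _ ha))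
      (by
        intro v x hv a ha
        rw [show a * (v * x) = (a * v) * x from (mul_assoc a v x).symm]
        have hav : a * v ∈ K := K.mul_mem_right _ _ ha
        constructor
        · rw [(hc (a * v) hav x).1]
          exact K'.mul_mem_right _ _ (hv a ha).1
        · rw [(hd (a * v) hav x).1]
          exact K'.mul_mem_left _ _ (hv a ha).2)
    have hbT : b ∈ T := by
      refine TwoSidedIdeal.mem_span_iff.mp hb T ?_
      rintro v ⟨x, y, rfl⟩
      rw [SetLike.mem_coe, TwoSidedIdeal.mem_mk']
      intro a ha
      exact hgen a ha x y
    rw [TwoSidedIdeal.mem_mk'] at hbT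
    exact hbT a ha
  -- extend from generators of K² to all of K²
  intro u hu
  let M : TwoSidedIdeal R := TwoSidedIdeal.mk'
    {u : R | u ∈ K ∧ (φ₁ u : R') ∈ K' ∧ (φ₂ u : R') ∈ K'}
    ⟨K.zero_mem, by rw [hz1, hz2]; simp [K'.zero_mem]⟩
    (by
      rintro v w ⟨hv, hv1, hv2⟩ ⟨hw, hw1, hw2⟩
      refine ⟨K.add_mem hv hw, ?_, ?_⟩
      · rw [h1add _ hv _ hw]; push_cast; exact K'.add_mem hv1 hw1
      · rw [h2add _ hv _ hw]; push_cast; exact K'.add_mem hv2 hw2)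
    (by
      rintro v ⟨hv, hv1, hv2⟩
      refine ⟨K.neg_mem hv, ?_, ?_⟩
      · rw [hneg1 _ hv]; push_cast; exact K'.neg_mem hv1
      · rw [hneg2 _ hv]; push_cast; exact K'.neg_mem hv2)
    (by
      rintro x v ⟨hv, hv1, hv2⟩
      refine ⟨K.mul_mem_left _ _ hv, ?_, ?_⟩
      · rw [(hc v hv x).2]; exact K'.mul_mem_left _ _ hv1
      · rw [(hd v hv x).2]; exact K'.mul_mem_right _ _ hv2)
    (by
      rintro v x ⟨hv, hv1, hv2⟩
      refine ⟨K.mul_mem_right _ _ hv, ?_, ?_⟩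
      · rw [(hc v hv x).1]; exact K'.mul_mem_right _ _ hv1
      · rw [(hd v hv x).1]; exact K'.mul_mem_left _ _ hv2)
  have huM : u ∈ M := by
    refine TwoSidedIdeal.mem_span_iff.mp hu M ?_
    rintro z ⟨a, ha, b, hb, rfl⟩
    rw [SetLike.mem_coe, TwoSidedIdeal.mem_mk']
    exact ⟨K.mul_mem_right _ _ ha, hprod a ha b hb⟩
  rw [TwoSidedIdeal.mem_mk'] at huM
  exact huM.2
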